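/- arXiv:1605.02291 — 2 statements merged into one kernel-verified Lean document; each statement's English description precedes it below -/
import Mathlib

section
/- For every k ≥ 1 and n > k, the domination polynomial of the k-star satisfies D(S_{k,n−k}, x) = (1+x)^{n−k}((1+x)^k − 1) + x^{n−k}. -/
open Polynomial

variable {V W : Type*}

/-- `S` is a dominating set of `G`. -/
def Dominates (G : SimpleGraph V) (S : Finset V) : Prop :=
  ∀ v, v ∉ S → ∃ u ∈ S, G.Adj u v

open Classical in
/-- The domination polynomial of a finite simple graph. -/
noncomputable def domPoly [Fintype V] (G : SimpleGraph V) : Polynomial ℤ :=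
  ∑ S : Finset V, if Dominates G S then (X : Polynomial ℤ) ^ S.card else 0

/-- The join of two graphs on disjoint vertex sets. -/
def graphJoin (G : SimpleGraph V) (H : SimpleGraph W) : SimpleGraph (V ⊕ W) where
  Adj x y :=
    match x, y with
    | Sum.inl a, Sum.inl b => G.Adj a b
    | Sum.inr a, Sum.inr b => H.Adj a b
    | _, _ => True
  symm := by
    refine ⟨?_⟩
    rintro (a | a) (b | b) h
    · exact G.adj_symm h
    · trivial
    · trivial
    · exact H.adj_symm h
  loopless := by
    refine ⟨?_⟩
    rintro (a | a) h
    · exact G.irrefl h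
    · exact H.irrefl h

/-- The `k`-star `S_{k,s}`: the join of `K_k` with the edgeless graph on `s` vertices. -/
def kstar (k s : ℕ) : SimpleGraph (Fin k ⊕ Fin s) :=
  graphJoin (⊤ : SimpleGraph (Fin k)) (⊥ : SimpleGraph (Fin s))

lemma sum_pow_card_aux (α : Type*) [Fintype α] :
    ∑ A : Finset α, (X : Polynomial ℤ)^A.card = (1+X)^(Fintype.card α) := by
  classical
  have h := Finset.prod_add (fun _ : α => (X : Polynomial ℤ)) (fun _ => 1) Finset.univ
  simp only [Finset.prod_const, Finset.prod_const_one, mul_one, Finset.card_univ,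
    one_pow, Finset.powerset_univ] at h
  rw [add_comm, ← h]

lemma dominates_kstar_iff (k s : ℕ) (hk : 1 ≤ k) (hs : 1 ≤ s)
    (A : Finset (Fin k)) (B : Finset (Fin s)) :
    Dominates (kstar k s) (A.disjSum B) ↔ A.Nonempty ∨ B = Finset.univ := by
  constructor
  · intro hdom
    rcases A.eq_empty_or_nonempty with hA | hA
    · right
      ext b
      simp only [Finset.mem_univ, iff_true]
      by_contra hb
      obtain ⟨u, hu, hadj⟩ := hdom (Sum.inr b) (by simpa [Finset.inr_mem_disjSum] using hb)
      rcases u with a | b'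
      · rw [Finset.inl_mem_disjSum] at hu
        simp [hA] at hu
      · exact hadj.elim
    · exact Or.inl hA
  · rintro (⟨a, ha⟩ | hB)
    · intro v hv
      refine ⟨Sum.inl a, Finset.inl_mem_disjSum.2 ha, ?_⟩
      rcases v with b | b
      · have hb : b ∉ A := fun h => hv (Finset.inl_mem_disjSum.2 h)
        have : a ≠ b := fun h => hb (h ▸ ha)
        exact this
      · trivial
    · intro v hv
      obtain ⟨b⟩ : Nonempty (Fin s) := ⟨⟨0, hs⟩⟩
      rcases v with a | b'
      · exact ⟨Sum.inr b, Finset.inr_mem_disjSum.2 (hB ▸ Finset.mem_univ b), trivial⟩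
      · exact absurd (Finset.inr_mem_disjSum.2 (hB ▸ Finset.mem_univ b')) hv

/-- The domination polynomial of the `k`-star `S_{k,n−k}`. -/
theorem domPoly_kstar (k n : ℕ) (hk : 1 ≤ k) (hn : k < n) :
    domPoly (kstar k (n - k)) =
      (1 + X) ^ (n - k) * ((1 + X) ^ k - 1) + X ^ (n - k) := by
  classical
  set s := n - k with hs_def
  have hs : 1 ≤ s := Nat.le_sub_of_add_le (by omega)
  -- reindex the sum over Finset (Fin k ⊕ Fin s) by pairs
  have hre : domPoly (kstar k s) =
      ∑ p : Finset (Fin k) × Finset (Fin s),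
        if Dominates (kstar k s) (p.1.disjSum p.2) then
          (X : Polynomial ℤ) ^ (p.1.card + p.2.card) else 0 := by
    rw [domPoly]
    refine (Fintype.sum_bijective (fun p : Finset (Fin k) × Finset (Fin s) => p.1.disjSum p.2)
      ?_ _ _ ?_).symm
    · constructor
      · intro p q h
        have h1 := congrArg Finset.toLeft h
        have h2 := congrArg Finset.toRight h
        simp only [Finset.toLeft_disjSum, Finset.toRight_disjSum] at h1 h2
        exact Prod.ext h1 h2
      · intro u
        exact ⟨(u.toLeft, u.toRight), Finset.toLeft_disjSum_toRight⟩
    · intro p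
      rw [Finset.card_disjSum]
  rw [hre, Fintype.sum_prod_type]
  have key : ∀ A : Finset (Fin k),
      (∑ B : Finset (Fin s),
        if Dominates (kstar k s) (A.disjSum B) then
          (X : Polynomial ℤ) ^ (A.card + B.card) else 0)
      = X ^ A.card * (1+X)^s +
          (if A = ∅ then X^s - (1+X)^s else 0) := by
    intro A
    rcases A.eq_empty_or_nonempty with hA | hA
    · subst hA
      have : ∀ B : Finset (Fin s),
          Dominates (kstar k s) ((∅ : Finset (Fin k)).disjSum B) ↔ B = Finset.univ := by
        intro B
        rw [dominates_kstar_iff k s hk hs]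
        simp
      simp only [this]
      rw [Finset.sum_ite_eq' Finset.univ Finset.univ
        (fun B => (X : Polynomial ℤ) ^ ((∅ : Finset (Fin k)).card + B.card))]
      simp [Finset.card_univ]
    · have hne : A ≠ ∅ := Finset.nonempty_iff_ne_empty.1 hA
      have : ∀ B : Finset (Fin s), Dominates (kstar k s) (A.disjSum B) := by
        intro B
        rw [dominates_kstar_iff k s hk hs]
        exact Or.inl hA
      simp only [this, if_true, if_neg hne, add_zero, pow_add]
      rw [← Finset.mul_sum, sum_pow_card_aux]
      simp
  simp only [key]
  rw [Finset.sum_add_distrib]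
  rw [Finset.sum_ite_eq' Finset.univ (∅ : Finset (Fin k))
    (fun _ => (X : Polynomial ℤ)^s - (1+X)^s)]
  simp only [Finset.mem_univ, if_true]
  rw [← Finset.sum_mul, sum_pow_card_aux]
  simp only [Fintype.card_fin]
  ring
end

section
/- Let G₁, G₂, and H be finite simple graphs with H having at least one vertex. Then D(G₁ + H, x) = D(G₂ + H, x) if and only if D(G₁, x) = D(G₂, x). -/
open Polynomial

variable {V W : Type*}

/-! ### Auxiliary lemmas -/

open Finset

lemma domPoly_degree [Fintype V] (G : SimpleGraph V) :
    (domPoly G).degree = Fintype.card V := by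
  classical
  have huniv : Dominates G (univ : Finset V) := fun v hv => absurd (mem_univ v) hv
  rw [domPoly, ← Finset.add_sum_erase _ _ (mem_univ (univ : Finset V)), if_pos huniv,
    card_univ]
  rw [degree_add_eq_left_of_degree_lt, degree_X_pow]
  rw [degree_X_pow]
  refine lt_of_le_of_lt (degree_sum_le _ _) ?_
  rw [Finset.sup_lt_iff (by exact_mod_cast WithBot.bot_lt_coe _)]
  intro S hS
  rcases Finset.mem_erase.1 hS with ⟨hne, -⟩
  have hcard : S.card < Fintype.card V :=
    lt_of_le_of_ne (Finset.card_le_univ S) (fun h => hne (Finset.eq_univ_of_card S h))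
  split_ifs
  · rw [degree_X_pow]; exact_mod_cast hcard
  · rw [degree_zero]; exact WithBot.bot_lt_coe _

open Classical in
/-- The sum over nonempty dominating sets. -/
noncomputable def dplus [Fintype V] (G : SimpleGraph V) : Polynomial ℤ :=
  ∑ S : Finset V, if S.Nonempty ∧ Dominates G S then (X : Polynomial ℤ) ^ S.card else 0

lemma domPoly_eq_dplus [Fintype V] (G : SimpleGraph V) :
    domPoly G = dplus G + if Fintype.card V = 0 then 1 else 0 := by
  classical
  have hemp : Dominates G (∅ : Finset V) ↔ Fintype.card V = 0 := by
    constructor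
    · intro h
      by_contra hne
      obtain ⟨v⟩ := Fintype.card_pos_iff.1 (Nat.pos_of_ne_zero hne)
      obtain ⟨u, hu, -⟩ := h v (Finset.notMem_empty v)
      exact Finset.notMem_empty u hu
    · intro h v hv
      have : IsEmpty V := Fintype.card_eq_zero_iff.1 h
      exact this.elim v
  have h2 : (∑ S : Finset V,
      if S = ∅ then (if Fintype.card V = 0 then (1 : Polynomial ℤ) else 0) else 0)
      = if Fintype.card V = 0 then 1 else 0 := by
    rw [Finset.sum_ite_eq' Finset.univ (∅ : Finset V)
      (fun _ => if Fintype.card V = 0 then (1 : Polynomial ℤ) else 0)]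
    simp
  rw [domPoly, dplus, ← h2, ← Finset.sum_add_distrib]
  refine Finset.sum_congr rfl fun S _ => ?_
  rcases S.eq_empty_or_nonempty with rfl | hS
  · simp [hemp, Finset.not_nonempty_empty]
  · simp [hS, Finset.nonempty_iff_ne_empty.1 hS]

lemma sum_nonempty_pow [Fintype V] :
    (∑ S : Finset V, if S.Nonempty then (X : Polynomial ℤ) ^ S.card else 0)
      = (X + 1) ^ Fintype.card V - 1 := by
  classical
  have hall : (∑ S : Finset V, (X : Polynomial ℤ) ^ S.card)
      = (X + 1) ^ Fintype.card V := by
    rw [← Finset.card_univ, ← Finset.prod_const (b := (X + 1 : Polynomial ℤ)),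
      Finset.prod_add]
    simp [Finset.powerset_univ]
  have h2 : (∑ S : Finset V, if S = ∅ then (1 : Polynomial ℤ) else 0) = 1 := by
    rw [Finset.sum_ite_eq' Finset.univ (∅ : Finset V) (fun _ => (1 : Polynomial ℤ))]
    simp
  rw [eq_sub_iff_add_eq, ← hall, ← h2, ← Finset.sum_add_distrib]
  refine Finset.sum_congr rfl fun S _ => ?_
  rcases S.eq_empty_or_nonempty with rfl | hS
  · simp [Finset.not_nonempty_empty]
  · simp [hS, Finset.nonempty_iff_ne_empty.1 hS]

lemma dominates_join_iff [Nonempty W] (G : SimpleGraph V) (H : SimpleGraph W)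
    (A : Finset V) (B : Finset W) :
    Dominates (graphJoin G H) (A.disjSum B) ↔
      (A.Nonempty ∧ B.Nonempty) ∨ (B = ∅ ∧ A.Nonempty ∧ Dominates G A) ∨
        (A = ∅ ∧ B.Nonempty ∧ Dominates H B) := by
  constructor
  · intro hdom
    rcases A.eq_empty_or_nonempty with hA | hA
    · rcases B.eq_empty_or_nonempty with hB | hB
      · exfalso
        obtain ⟨w⟩ := ‹Nonempty W›
        obtain ⟨u, hu, -⟩ := hdom (Sum.inr w) (by simp [hA, hB])
        cases u <;> simp [hA, hB, Finset.inl_mem_disjSum, Finset.inr_mem_disjSum] at hu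
      · refine Or.inr (Or.inr ⟨hA, hB, fun y hy => ?_⟩)
        obtain ⟨u, hu, hadj⟩ := hdom (Sum.inr y) (by simpa using hy)
        cases u with
        | inl a => simp [hA] at hu
        | inr b => exact ⟨b, by simpa using hu, hadj⟩
    · rcases B.eq_empty_or_nonempty with hB | hB
      · refine Or.inr (Or.inl ⟨hB, hA, fun x hx => ?_⟩)
        obtain ⟨u, hu, hadj⟩ := hdom (Sum.inl x) (by simpa using hx)
        cases u with
        | inl a => exact ⟨a, by simpa using hu, hadj⟩
        | inr b => simp [hB] at hu
      · exact Or.inl ⟨hA, hB⟩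
  · rintro (⟨⟨a, ha⟩, ⟨b, hb⟩⟩ | ⟨rfl, ⟨a, ha⟩, hdom⟩ | ⟨rfl, ⟨b, hb⟩, hdom⟩) <;>
      rintro (x | y) hv
    · exact ⟨Sum.inr b, by simpa using hb, trivial⟩
    · exact ⟨Sum.inl a, by simpa using ha, trivial⟩
    · obtain ⟨u, hu, hadj⟩ := hdom x (by simpa using hv)
      exact ⟨Sum.inl u, by simpa using hu, hadj⟩
    · exact ⟨Sum.inl a, by simpa using ha, trivial⟩
    · exact ⟨Sum.inr b, by simpa using hb, trivial⟩
    · obtain ⟨u, hu, hadj⟩ := hdom y (by simpa using hv)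
      exact ⟨Sum.inr u, by simpa using hu, hadj⟩

def finsetSumEquiv : Finset V × Finset W ≃ Finset (V ⊕ W) where
  toFun p := p.1.disjSum p.2
  invFun u := (u.toLeft, u.toRight)
  left_inv p := by simp
  right_inv u := Finset.toLeft_disjSum_toRight

lemma domPoly_join [Fintype V] [Fintype W] [Nonempty W] (G : SimpleGraph V)
    (H : SimpleGraph W) :
    domPoly (graphJoin G H)
      = ((X + 1) ^ Fintype.card V - 1) * ((X + 1) ^ Fintype.card W - 1)
        + dplus G + dplus H := by
  classical
  rw [domPoly, ← Fintype.sum_equiv (finsetSumEquiv (V := V) (W := W))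
    (fun p => if Dominates (graphJoin G H) (p.1.disjSum p.2)
      then (X : Polynomial ℤ) ^ (p.1.card + p.2.card) else 0) _
    (fun p => by simp [finsetSumEquiv, Finset.card_disjSum])]
  have key : ∀ (A : Finset V) (B : Finset W),
      (if Dominates (graphJoin G H) (A.disjSum B)
        then (X : Polynomial ℤ) ^ (A.card + B.card) else 0)
      = (if A.Nonempty then (X : Polynomial ℤ) ^ A.card else 0) *
          (if B.Nonempty then (X : Polynomial ℤ) ^ B.card else 0)
        + (if B = ∅ then (if A.Nonempty ∧ Dominates G A
            then (X : Polynomial ℤ) ^ A.card else 0) else 0)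
        + (if A = ∅ then (if B.Nonempty ∧ Dominates H B
            then (X : Polynomial ℤ) ^ B.card else 0) else 0) := by
    intro A B
    rw [dominates_join_iff]
    rcases A.eq_empty_or_nonempty with hA | hA <;>
      rcases B.eq_empty_or_nonempty with hB | hB
    · simp [hA, hB, Finset.not_nonempty_empty]
    · simp [hA, hB, Finset.not_nonempty_empty, Finset.nonempty_iff_ne_empty.1 hB]
    · simp [hA, hB, Finset.not_nonempty_empty, Finset.nonempty_iff_ne_empty.1 hA]
    · simp [hA, hB, Finset.nonempty_iff_ne_empty.1 hA,
        Finset.nonempty_iff_ne_empty.1 hB, pow_add]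
  simp only [key]
  rw [Finset.sum_add_distrib, Finset.sum_add_distrib]
  congr 1
  congr 1
  · rw [Fintype.sum_prod_type]
    dsimp only
    rw [← sum_nonempty_pow, ← sum_nonempty_pow, Finset.sum_mul_sum]
  · rw [Fintype.sum_prod_type, dplus]
    refine Finset.sum_congr rfl fun A _ => ?_
    dsimp only
    rw [Finset.sum_ite_eq' Finset.univ (∅ : Finset W)]
    simp
  · rw [Fintype.sum_prod_type]
    dsimp only
    have h3 : ∀ A : Finset V, (∑ B : Finset W,
        if A = ∅ then (if B.Nonempty ∧ Dominates H B
          then (X : Polynomial ℤ) ^ B.card else 0) else 0)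
        = if A = ∅ then dplus H else 0 := by
      intro A; split_ifs <;> simp [dplus]
    simp only [h3]
    rw [Finset.sum_ite_eq' Finset.univ (∅ : Finset V)]
    simp

lemma domPoly_card_eq [Fintype V] {V' : Type*} [Fintype V'] {G : SimpleGraph V}
    {G' : SimpleGraph V'} (h : domPoly G = domPoly G') :
    Fintype.card V = Fintype.card V' := by
  have := domPoly_degree G
  rw [h, domPoly_degree G'] at this
  exact_mod_cast this.symm

/-- Joining with a fixed nonempty graph `H` is cancellative for the
domination polynomial. -/
theorem domPoly_join_cancel {V₁ V₂ W : Type*} [Fintype V₁] [Fintype V₂] [Fintype W]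
    [Nonempty W] (G₁ : SimpleGraph V₁) (G₂ : SimpleGraph V₂) (H : SimpleGraph W) :
    domPoly (graphJoin G₁ H) = domPoly (graphJoin G₂ H) ↔
      domPoly G₁ = domPoly G₂ := by
  constructor
  · intro h
    have hcard : Fintype.card V₁ = Fintype.card V₂ := by
      have := domPoly_card_eq h
      simpa [Fintype.card_sum] using this
    rw [domPoly_join, domPoly_join, hcard] at h
    have hd : dplus G₁ = dplus G₂ := by
      have h' := add_right_cancel h
      exact add_left_cancel h'
    rw [domPoly_eq_dplus, domPoly_eq_dplus, hd, hcard]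
  · intro h
    have hcard : Fintype.card V₁ = Fintype.card V₂ := domPoly_card_eq h
    have hd : dplus G₁ = dplus G₂ := by
      rw [domPoly_eq_dplus, domPoly_eq_dplus, hcard] at h
      exact add_right_cancel h
    rw [domPoly_join, domPoly_join, hcard, hd]
end
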